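/- Let v be a Llull matrix with CLC structure on (S, ξ) such that t_{xy} = 0 for some pair x ≠ y. Then there exists a subset Y ⊆ S such that t_{xx̄} > 0 for all distinct x, x̄ ∉ Y, and v_{yx} = 0 for all y ∈ Y and x ≠ y. -/

import Mathlib

/-- The minimum score along a path `x, z₁, …, zₖ, y` (the list gives the
intermediate points; the empty list is the direct link from `x` to `y`). -/
def chainMin {S : Type*} (v : S → S → ℝ) : S → List S → S → ℝ
  | x, [], y => v x y
  | x, z :: l, y => min (v x z) (chainMin v z l y)

/-- Indirect (max-min) score: supremum over all paths from `x` to `y`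
of the minimum direct score along the path. -/
noncomputable def iScore {S : Type*} (v : S → S → ℝ) (x y : S) : ℝ :=
  sSup {r : ℝ | ∃ l : List S, r = chainMin v x l y}

/-- A Llull matrix: preference scores in `[0,1]` with `v x y + v y x ≤ 1`. -/
def IsLlull {S : Type*} (v : S → S → ℝ) : Prop :=
  ∀ x y : S, x ≠ y → 0 ≤ v x y ∧ v x y ≤ 1 ∧ v x y + v y x ≤ 1


/-- CLC structure with respect to the linear order on `S` (the admissible order ξ):
(1) `v x y ≥ v y x` for `x < y`; (2) `v x z = max (v x y) (v y z)` and
(3) `v z x = min (v z y) (v y x)` for `x < y < z`; (4) `0 ≤ t x z − t x' z ≤ m x x'`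
for `z ∉ {x, x'}` where `x'` is the immediate successor (`x ⋖ x'`),
`t x y = v x y + v y x` and `m x y = v x y − v y x`. -/
def CLC {S : Type*} [LinearOrder S] (v : S → S → ℝ) : Prop :=
  (∀ x y : S, x < y → v y x ≤ v x y) ∧
  (∀ x y z : S, x < y → y < z → v x z = max (v x y) (v y z)) ∧
  (∀ x y z : S, x < y → y < z → v z x = min (v z y) (v y x)) ∧
  (∀ x x' z : S, x ⋖ x' → z ≠ x → z ≠ x' →
    0 ≤ (v x z + v z x) - (v x' z + v z x') ∧
    (v x z + v z x) - (v x' z + v z x') ≤ v x x' - v x' x)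


section Aux
variable {S : Type*} [LinearOrder S] [Fintype S] {v : S → S → ℝ}

lemma aux_nn (hv : IsLlull v) {x y : S} (h : x ≠ y) : 0 ≤ v x y := (hv x y h).1

lemma aux_tzero (hv : IsLlull v) {x y : S} (h : x ≠ y) (ht : v x y + v y x = 0) :
    v x y = 0 ∧ v y x = 0 := by
  have h1 := (hv x y h).1
  have h2 := (hv y x h.symm).1
  constructor <;> linarith

lemma aux_exists_covby {b c : S} (h : b < c) : ∃ p, b ≤ p ∧ p ⋖ c := by
  classical
  set s := Finset.univ.filter (· < c) with hs
  have hb : b ∈ s := by simp [hs, h]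
  have hne : s.Nonempty := ⟨b, hb⟩
  refine ⟨s.max' hne, s.le_max' b hb, ?_, ?_⟩
  · have := s.max'_mem hne; simpa [hs] using this
  · intro z hz hzc
    have hzs : z ∈ s := by simp [hs, hzc]
    exact absurd (s.le_max' z hzs) (not_le.mpr hz)

lemma aux_A (hv : IsLlull v) (hclc : CLC v) {a b : S} (hab : a < b)
    (ht : v a b + v b a = 0) : ∀ c, a < c → v a c + v c a = 0 := by
  have key : ∀ c, b ≤ c → v a c + v c a = 0 := by
    intro c
    induction c using WellFoundedLT.induction with
    | _ c ih =>
      intro hc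
      rcases eq_or_lt_of_le hc with rfl | hbc
      · exact ht
      · obtain ⟨p, hbp, hpc⟩ := aux_exists_covby hbc
        have hap : v a p + v p a = 0 := ih p hpc.lt hbp
        have hane : a ≠ p := ne_of_lt (lt_of_lt_of_le hab hbp)
        have hac : a ≠ c := ne_of_lt (hab.trans hbc)
        have h4 := (hclc.2.2.2 p c a hpc hane hac).1
        have n1 := aux_nn hv hac
        have n2 := aux_nn hv hac.symm
        linarith
  intro c hac
  rcases lt_or_ge c b with hcb | hbc
  · have hmax := hclc.2.1 a c b hac hcb
    obtain ⟨hab0, hba0⟩ := aux_tzero hv hab.ne ht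
    have h1 := hclc.1 a c hac
    have n2 := aux_nn hv hac.ne'
    have hle : v a c ≤ v a b := hmax ▸ le_max_left _ _
    linarith
  · exact key c hbc

lemma aux_B (hv : IsLlull v) (hclc : CLC v) {a b : S} (hab : a < b)
    (ht : v a b + v b a = 0) : ∀ x, x ≠ b → v b x = 0 := by
  intro x hx
  obtain ⟨hab0, hba0⟩ := aux_tzero hv hab.ne ht
  rcases lt_trichotomy x a with hxa | rfl | hax
  · have hm := hclc.2.2.1 x a b hxa hab
    rw [hba0] at hm
    have n := aux_nn hv hxa.ne'
    rw [hm]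
    exact min_eq_left n
  · exact hba0
  · rcases lt_trichotomy x b with hxb | rfl | hbx
    · have hm := hclc.2.1 a x b hax hxb
      rw [hab0] at hm
      have hle : v x b ≤ v a b := (hclc.2.1 a x b hax hxb) ▸ le_max_right _ _
      have h1 := hclc.1 x b hxb
      have n := aux_nn hv hxb.ne'
      rw [hab0] at hle
      linarith
    · exact absurd rfl hx
    · have htax := aux_A hv hclc hab ht x (hab.trans hbx)
      obtain ⟨hax0, hxa0⟩ := aux_tzero hv (hab.trans hbx).ne htax
      have hm := hclc.2.1 a b x hab hbx
      have hle : v b x ≤ v a x := hm ▸ le_max_right _ _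
      have n := aux_nn hv hbx.ne
      rw [hax0] at hle
      linarith

lemma aux_C (hv : IsLlull v) (hclc : CLC v) {a b : S} (hab : a < b)
    (ht : v a b + v b a = 0) : ∀ x, x ≠ a → v a x = 0 := by
  intro x hx
  rcases lt_or_gt_of_ne hx with hxa | hax
  · obtain ⟨p, hxp, hpa⟩ := aux_exists_covby hxa
    obtain ⟨hab0, hba0⟩ := aux_tzero hv hab.ne ht
    have hpb : v p b = max (v p a) (v a b) := hclc.2.1 p a b hpa.lt hab
    have hbp : v b p = min (v b a) (v a p) := hclc.2.2.1 p a b hpa.lt hab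
    have h4 := (hclc.2.2.2 p a b hpa (ne_of_gt (hpa.lt.trans hab)) (ne_of_gt hab)).2
    have hap_nn := aux_nn hv hpa.lt.ne'
    have hpa_nn := aux_nn hv hpa.lt.ne
    rw [hab0] at hpb
    rw [hba0] at hbp
    have hpb' : v p b = v p a := by rw [hpb]; exact max_eq_left hpa_nn
    have hbp' : v b p = 0 := by rw [hbp]; exact min_eq_left hap_nn
    have hap0 : v a p = 0 := by
      rw [hpb', hbp', hab0, hba0] at h4
      linarith
    rcases eq_or_lt_of_le hxp with rfl | hxp'
    · exact hap0
    · have hm := hclc.2.2.1 x p a hxp' hpa.lt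
      rw [hap0] at hm
      have n := aux_nn hv hxp'.ne'
      rw [hm]
      exact min_eq_left n
  · exact (aux_tzero hv hax.ne (aux_A hv hclc hab ht x hax)).1

end Aux

/-- If some turnout vanishes, there is a set `Y` such that turnouts are positive
off `Y` and `v y x = 0` for all `y ∈ Y`, `x ≠ y`. -/


theorem stmt18 {S : Type*} [LinearOrder S] [Fintype S]
    (v : S → S → ℝ) (hv : IsLlull v) (hclc : CLC v)
    (hz : ∃ x y : S, x ≠ y ∧ v x y + v y x = 0) :
    ∃ Y : Set S,
      (∀ x xb : S, x ∉ Y → xb ∉ Y → x ≠ xb → 0 < v x xb + v xb x) ∧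
      (∀ y ∈ Y, ∀ x : S, x ≠ y → v y x = 0) := by
  classical
  refine ⟨{y | ∃ x, x ≠ y ∧ v x y + v y x = 0}, ?_, ?_⟩
  · intro x xb hx hxb hne
    have n1 := aux_nn hv hne
    have n2 := aux_nn hv hne.symm
    rcases lt_or_eq_of_le (by linarith : (0:ℝ) ≤ v x xb + v xb x) with h | h
    · exact h
    · exact absurd ⟨x, hne, h.symm⟩ hxb
  · rintro y ⟨x, hxy, ht⟩ z hz'
    rcases lt_or_gt_of_ne hxy with h | h
    · exact aux_B hv hclc h ht z hz'
    · exact aux_C hv hclc h (by linarith) z hz'
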